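/- Let (X,Y) ∈ [0,1]^d × {-1,1} be a random couple with distribution P whose regression function η and marginal Π satisfy the low noise assumption with parameters B, γ > 0. Then there exists a constant D1 > 0 depending only on B and γ such that for every bounded measurable f : [0,1]^d → ℝ, R_P(f) − R* ≤ D1 · ‖(f − η)·1{sign f ≠ sign η}‖_∞^{1+γ}, where ‖·‖_∞ is the supremum norm on [0,1]^d. -/

import Mathlib

open MeasureTheory ProbabilityTheory Set

noncomputable section

namespace ActivePlugIn

variable {d : ℕ}

/-- The unit cube `[0,1]^d`. -/
def cube (d : ℕ) : Set (Fin d → ℝ) := Set.Icc 0 1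

/-- Sign function (with the convention `sgn 0 = -1`). -/
def sgn (t : ℝ) : ℝ := if 0 < t then 1 else -1

/-- Binary classification risk `R_P(f) = P(Y ≠ sign f(X))`. -/
def risk (P : Measure ((Fin d → ℝ) × ℝ)) (f : (Fin d → ℝ) → ℝ) : ℝ :=
  (P {p | p.2 ≠ sgn (f p.1)}).toReal

/-- Bayes risk: infimum of the risk over all measurable `g : [0,1]^d → [-1,1]`. -/
def bayesRisk (P : Measure ((Fin d → ℝ) × ℝ)) : ℝ :=
  ⨅ g : {g : (Fin d → ℝ) → ℝ // Measurable g ∧ ∀ x, g x ∈ Set.Icc (-1 : ℝ) 1},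
    risk P g.1

/-- `η` is (a version of) the regression function `E(Y | X = x)` of `P`. -/
def IsRegressionOf (η : (Fin d → ℝ) → ℝ) (P : Measure ((Fin d → ℝ) × ℝ)) : Prop :=
  ∀ s : Set (Fin d → ℝ), MeasurableSet s →
    ∫ p in Prod.fst ⁻¹' s, p.2 ∂P = ∫ x in s, η x ∂(P.map Prod.fst)

/-- `P` is a distribution of a random couple `(X,Y) ∈ [0,1]^d × {-1,1}` with
regression function `η`. -/
def GoodPair (d : ℕ) (P : Measure ((Fin d → ℝ) × ℝ)) (η : (Fin d → ℝ) → ℝ) : Prop :=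
  IsProbabilityMeasure P ∧ Measurable η ∧ (∀ x, η x ∈ Set.Icc (-1 : ℝ) 1) ∧
    (∀ᵐ p ∂P, p.1 ∈ cube d ∧ (p.2 = 1 ∨ p.2 = -1)) ∧ IsRegressionOf η P

/-- Tsybakov's low noise assumption with constants `B, γ`. -/
def LowNoise (B γ : ℝ) (μ : Measure (Fin d → ℝ)) (η : (Fin d → ℝ) → ℝ) : Prop :=
  ∀ t : ℝ, 0 < t → μ {x | |η x| ≤ t} ≤ ENNReal.ofReal (B * t ^ γ)

/-- Index of the level-`m` dyadic cube containing `x`. -/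
def cubeIdx (m : ℕ) (x : Fin d → ℝ) : Fin d → ℕ := fun i => ⌊x i * 2 ^ m⌋₊

/-- The (half-open) level-`m` dyadic cube with index `k`. -/
def dyadicCube (d m : ℕ) (k : Fin d → ℕ) : Set (Fin d → ℝ) :=
  {x | ∀ i, (k i : ℝ) / 2 ^ m ≤ x i ∧ x i < ((k i : ℝ) + 1) / 2 ^ m}

/-- Support of a measure: points all of whose open neighbourhoods have positive mass. -/
def suppSet (μ : Measure (Fin d → ℝ)) : Set (Fin d → ℝ) :=
  {x | ∀ U : Set (Fin d → ℝ), IsOpen U → x ∈ U → μ U ≠ 0}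

/-- `A` belongs to the sigma-algebra generated by level-`m` dyadic cubes,
i.e. it is a union of level-`m` dyadic cubes. -/
def IsDyadicUnion (d m : ℕ) (A : Set (Fin d → ℝ)) : Prop :=
  ∃ S : Set (Fin d → ℕ), A = ⋃ k ∈ S, dyadicCube d m k

/-- `(u1,u2)`-regularity of a measure with respect to the dyadic partitions. -/
def Regular (d : ℕ) (u1 u2 : ℝ) (μ : Measure (Fin d → ℝ)) : Prop :=
  ∀ m : ℕ, 1 ≤ m → ∀ k : Fin d → ℕ, (∀ i, k i < 2 ^ m) →
    (dyadicCube d m k ∩ suppSet μ).Nonempty →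
    ENNReal.ofReal (u1 / 2 ^ (d * m)) ≤ μ (dyadicCube d m k) ∧
      μ (dyadicCube d m k) ≤ ENNReal.ofReal (u2 / 2 ^ (d * m))

/-- The `L²(μ)`-projection `η̄_m` of `η` onto piecewise-constant functions over the
level-`m` dyadic partition: on each cube it is the `μ`-average of `η` over that cube. -/
def etaBar (μ : Measure (Fin d → ℝ)) (η : (Fin d → ℝ) → ℝ) (m : ℕ) (x : Fin d → ℝ) : ℝ :=
  ⨍ y in dyadicCube d m (cubeIdx m x), η y ∂μ

/-- `A` approximates the decision boundary at level `t`. -/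
def ApproxBoundary (μ : Measure (Fin d → ℝ)) (η : (Fin d → ℝ) → ℝ) (t : ℝ)
    (A : Set (Fin d → ℝ)) : Prop :=
  {x | |η x| ≤ t} ∩ suppSet μ ⊆ A ∩ suppSet μ ∧
    A ∩ suppSet μ ⊆ {x | |η x| ≤ 3 * t} ∩ suppSet μ

/-- Assumption 2 of the paper, with constant `B2`. -/
def Assumption2 (d : ℕ) (B2 : ℝ) (μ : Measure (Fin d → ℝ)) (η : (Fin d → ℝ) → ℝ) : Prop :=
  ∀ m : ℕ, 1 ≤ m → ∀ A : Set (Fin d → ℝ), IsDyadicUnion d m A →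
    (∃ t : ℝ, 0 < t ∧ ApproxBoundary μ η t A) → (A ∩ suppSet μ).Nonempty →
    B2 * (⨆ x ∈ A ∩ suppSet μ, |η x - etaBar μ η m x|) ^ 2 ≤
      ∫ x, (η x - etaBar μ η m x) ^ 2 ∂(μ[|A ∩ suppSet μ])

/-- The law of the label `Y ∈ {-1,1}` given `X = x`: `P(Y = 1|X = x) = (1 + η(x))/2`. -/
def labelKernel (d : ℕ) (η : (Fin d → ℝ) → ℝ) (x : Fin d → ℝ) : Measure ℝ :=
  ENNReal.ofReal ((1 + η x) / 2) • Measure.dirac 1 +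
    ENNReal.ofReal ((1 - η x) / 2) • Measure.dirac (-1)

/-- The joint law of `(X,Y)` when `X ∼ μ` and `P(Y = 1|X = x) = (1 + η(x))/2`. -/
def jointMeasure (d : ℕ) (μ : Measure (Fin d → ℝ)) (η : (Fin d → ℝ) → ℝ) :
    Measure ((Fin d → ℝ) × ℝ) :=
  μ.bind fun x => (labelKernel d η x).map fun y => (x, y)

/-- The law of the trajectory `(X_1,Y_1,…,X_N,Y_N)` of an active learning procedure:
`X_k` is sampled from the kernel `samp` applied to the past observations and `Y_k` is
sampled from the conditional label distribution determined by `η`. -/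
def traj (d : ℕ) (η : (Fin d → ℝ) → ℝ)
    (samp : (k : ℕ) → (Fin k → ((Fin d → ℝ) × ℝ)) → Measure (Fin d → ℝ)) :
    (N : ℕ) → Measure (Fin N → ((Fin d → ℝ) × ℝ))
  | 0 => Measure.dirac fun i => i.elim0
  | (N + 1) =>
      (traj d η samp N).bind fun h =>
        (samp N h).bind fun x => (labelKernel d η x).map fun y => Fin.snoc h (x, y)

/-- Kullback–Leibler divergence `KL(P,Q) = ∫ log (dP/dQ) dP`. -/
def kl {Ω : Type*} [MeasurableSpace Ω] (P Q : Measure Ω) : ℝ :=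
  ∫ ω, Real.log ((P.rnDeriv Q ω).toReal) ∂P

/-- Multivariate Taylor polynomial of degree `n` of `g` at `x`, evaluated at `x1`. -/
def taylorP (d : ℕ) (g : (Fin d → ℝ) → ℝ) (n : ℕ) (x x1 : Fin d → ℝ) : ℝ :=
  ∑ k ∈ Finset.range (n + 1),
    (1 / (Nat.factorial k : ℝ)) * iteratedFDeriv ℝ k g x (fun _ => x1 - x)

/-- The Hölder class `Σ(β,K,[0,1]^d)`. -/
def HolderSigma (d : ℕ) (β K : ℝ) (g : (Fin d → ℝ) → ℝ) : Prop :=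
  ContDiff ℝ (⌊β⌋₊ : ℕ) g ∧
    ∀ x ∈ cube d, ∀ x1 ∈ cube d, |g x1 - taylorP d g ⌊β⌋₊ x x1| ≤ K * ‖x - x1‖ ^ β

/-- The Hölder condition for exponent `0 < β ≤ 1` with constant `L`
(`‖·‖` on `Fin d → ℝ` is the sup-norm). -/
def HolderLow (d : ℕ) (β L : ℝ) (η : (Fin d → ℝ) → ℝ) : Prop :=
  ∀ x1 ∈ cube d, ∀ x2 ∈ cube d, |η x1 - η x2| ≤ L * ‖x1 - x2‖ ^ β

/-- The class `F_m` of piecewise-constant functions over the level-`m` dyadic partition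
with values bounded by `1`. -/
def Fclass (d m : ℕ) : Set ((Fin d → ℝ) → ℝ) :=
  {f | ∃ lam : (Fin d → ℕ) → ℝ, (∀ k, |lam k| ≤ 1) ∧ f = fun x => lam (cubeIdx m x)}

/-- Empirical quadratic risk `P_N (Y - f(X))²`. -/
def empRisk {d : ℕ} (N : ℕ) (ω : Fin N → ((Fin d → ℝ) × ℝ)) (f : (Fin d → ℝ) → ℝ) : ℝ :=
  (∑ j, ((ω j).2 - f (ω j).1) ^ 2) / N

/-- The set `J(N)` of admissible resolution levels. -/
def Jset (d N : ℕ) : Set ℕ :=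
  {m | 1 ≤ (2 : ℝ) ^ (d * m) ∧ (2 : ℝ) ^ (d * m) ≤ (N : ℝ) / (Real.log N) ^ 2}

/-- The penalized model-selection criterion with constant `K1`
(`s_m = m (s + log log₂ N)`). -/
def crit {d : ℕ} (K1 s : ℝ) (N : ℕ) (ω : Fin N → ((Fin d → ℝ) × ℝ)) (m : ℕ) : ℝ :=
  (⨅ f ∈ Fclass d m, empRisk N ω f) +
    K1 * ((2 : ℝ) ^ (d * m) + m * (s + Real.log (Real.logb 2 N))) / N

/-- `inf_{f ∈ F_m} E (f(X) - η(X))²`. -/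
def approxErr {d : ℕ} (μ : Measure (Fin d → ℝ)) (η : (Fin d → ℝ) → ℝ) (m : ℕ) : ℝ :=
  ⨅ f ∈ Fclass d m, ∫ x, (f x - η x) ^ 2 ∂μ

/-- `m̄ = min {m ≥ 1 : inf_{f ∈ F_m} E(f(X)-η(X))² ≤ K2 2^{dm}/N}`. -/
def mbar {d : ℕ} (K2 : ℝ) (N : ℕ) (μ : Measure (Fin d → ℝ)) (η : (Fin d → ℝ) → ℝ) : ℕ :=
  sInf {m | 1 ≤ m ∧ approxErr μ η m ≤ K2 * (2 : ℝ) ^ (d * m) / N}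

/-- Membership in the class `P*_U(β,γ)` (with Hölder smoothness stated for general `β`
via Taylor polynomials), for the pair (marginal `μ`, regression function `η`). -/
def InStarClass (d : ℕ) (β γ B K u1 u2 B2 : ℝ) (μ : Measure (Fin d → ℝ))
    (η : (Fin d → ℝ) → ℝ) : Prop :=
  IsProbabilityMeasure μ ∧ μ (cube d) = 1 ∧ Measurable η ∧
    (∀ x, η x ∈ Set.Icc (-1 : ℝ) 1) ∧ LowNoise B γ μ η ∧ HolderSigma d β K η ∧
    Regular d u1 u2 μ ∧ Assumption2 d B2 μ η

/-- Membership in the class `P*_U(β,γ)` for `0 < β ≤ 1`, with Hölder constant `B1`. -/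
def InStarClassLow (d : ℕ) (β γ B B1 u1 u2 B2 : ℝ) (μ : Measure (Fin d → ℝ))
    (η : (Fin d → ℝ) → ℝ) : Prop :=
  IsProbabilityMeasure μ ∧ μ (cube d) = 1 ∧ Measurable η ∧
    (∀ x, η x ∈ Set.Icc (-1 : ℝ) 1) ∧ LowNoise B γ μ η ∧ HolderLow d β B1 η ∧
    Regular d u1 u2 μ ∧ Assumption2 d B2 μ η

/-! ### Auxiliary lemmas for Statement 0 -/

lemma sgn_cases (t : ℝ) : sgn t = 1 ∨ sgn t = -1 := by
  unfold sgn; split <;> simp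

lemma measurable_sgn : Measurable sgn := by
  unfold sgn
  exact Measurable.ite (measurableSet_lt measurable_const measurable_id)
    measurable_const measurable_const

lemma half_sub (a b : ℝ) :
    (a * sgn a - a * sgn b) / 2 = if sgn b ≠ sgn a then |a| else 0 := by
  unfold sgn
  by_cases ha : 0 < a <;> by_cases hb : 0 < b <;>
    simp [ha, hb, abs_of_pos, abs_of_nonpos, not_lt.1] <;> norm_num <;> ring

lemma abs_le_of_sgn_ne {a b : ℝ} (h : sgn a ≠ sgn b) : |b| ≤ |a - b| := by
  unfold sgn at h
  by_cases ha : 0 < a <;> by_cases hb : 0 < b <;> simp [ha, hb] at h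
  · rw [abs_of_nonpos (not_lt.1 hb), abs_of_pos (by linarith [not_lt.1 hb] : 0 < a - b)]
    linarith [not_lt.1 hb]
  · rw [abs_of_pos hb, abs_of_nonpos (by linarith [not_lt.1 ha] : a - b ≤ 0)]
    linarith [not_lt.1 ha]

lemma integrable_of_ae_bdd {α : Type*} [MeasurableSpace α] {μ : Measure α}
    [IsFiniteMeasure μ] {h : α → ℝ} (hm : AEStronglyMeasurable h μ) {C : ℝ}
    (hb : ∀ᵐ x ∂μ, |h x| ≤ C) : Integrable h μ :=
  (integrable_const C).mono' hm (by simpa using hb)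

lemma risk_eq {d : ℕ} {P : Measure ((Fin d → ℝ) × ℝ)} {η : (Fin d → ℝ) → ℝ}
    (hGP : GoodPair d P η) {g : (Fin d → ℝ) → ℝ} (hg : Measurable g) :
    risk P g = 1 / 2 - (∫ x, η x * sgn (g x) ∂(P.map Prod.fst)) / 2 := by
  obtain ⟨hP, hη, hη1, hae, hreg⟩ := hGP
  haveI : IsProbabilityMeasure (P.map Prod.fst) :=
    Measure.isProbabilityMeasure_map measurable_fst.aemeasurable
  have hsgng : Measurable fun x => sgn (g x) := measurable_sgn.comp hg
  have hS : MeasurableSet {p : (Fin d → ℝ) × ℝ | p.2 ≠ sgn (g p.1)} := by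
    have : MeasurableSet {p : (Fin d → ℝ) × ℝ | p.2 = sgn (g p.1)} :=
      measurableSet_eq_fun measurable_snd (hsgng.comp measurable_fst)
    exact this.compl
  have hT : Measurable fun p : (Fin d → ℝ) × ℝ => p.2 * sgn (g p.1) :=
    measurable_snd.mul (hsgng.comp measurable_fst)
  have haeY : ∀ᵐ p ∂P, p.2 = 1 ∨ p.2 = -1 := hae.mono fun p hp => hp.2
  have hTint : Integrable (fun p : (Fin d → ℝ) × ℝ => p.2 * sgn (g p.1)) P := by
    refine integrable_of_ae_bdd hT.aestronglyMeasurable (C := 1) ?_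
    refine haeY.mono fun p hp => ?_
    rcases hp with h | h <;> rcases sgn_cases (g p.1) with h2 | h2 <;>
      simp [h, h2]
  have step1 : risk P g = ∫ p, Set.indicator {p : (Fin d → ℝ) × ℝ | p.2 ≠ sgn (g p.1)}
      (1 : ((Fin d → ℝ) × ℝ) → ℝ) p ∂P := (integral_indicator_one hS).symm
  have step2 : ∀ᵐ p ∂P, Set.indicator {p : (Fin d → ℝ) × ℝ | p.2 ≠ sgn (g p.1)}
      (1 : ((Fin d → ℝ) × ℝ) → ℝ) p = 1 / 2 - p.2 * sgn (g p.1) / 2 := by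
    refine haeY.mono fun p hp => ?_
    rcases hp with h | h <;> rcases sgn_cases (g p.1) with h2 | h2 <;>
      simp [Set.indicator_apply, Set.mem_setOf_eq, Pi.one_apply, h, h2] <;> norm_num
  have step3 : risk P g = ∫ p, (1 / 2 - p.2 * sgn (g p.1) / 2) ∂P := by
    rw [step1]; exact integral_congr_ae step2
  have step4 : ∫ p, (1 / 2 - p.2 * sgn (g p.1) / 2) ∂P
      = 1 / 2 - (∫ p, p.2 * sgn (g p.1) ∂P) / 2 := by
    rw [integral_sub (integrable_const _) (hTint.div_const 2), integral_const,
      probReal_univ, integral_div]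
    simp
  -- the key identity: transfer the P-integral to the marginal via the regression fn
  have hS' : MeasurableSet {x | 0 < g x} := measurableSet_lt measurable_const hg
  have hηint : Integrable η (P.map Prod.fst) := by
    refine integrable_of_ae_bdd hη.aestronglyMeasurable (C := 1)
      (Filter.Eventually.of_forall fun x => abs_le.2 ⟨(hη1 x).1, (hη1 x).2⟩)
  have hηsint : Integrable (fun x => η x * sgn (g x)) (P.map Prod.fst) := by
    refine integrable_of_ae_bdd (hη.mul hsgng).aestronglyMeasurable (C := 1)
      (Filter.Eventually.of_forall fun x => ?_)
    rcases sgn_cases (g x) with h2 | h2 <;>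
      simp [h2, abs_le.2 ⟨(hη1 x).1, (hη1 x).2⟩]
  have hpre : MeasurableSet (Prod.fst ⁻¹' {x | 0 < g x} :
      Set ((Fin d → ℝ) × ℝ)) := hS'.preimage measurable_fst
  have e1 : ∫ p in Prod.fst ⁻¹' {x | 0 < g x}, p.2 * sgn (g p.1) ∂P
      = ∫ x in {x | 0 < g x}, η x ∂(P.map Prod.fst) := by
    rw [← hreg _ hS']
    refine setIntegral_congr_fun hpre fun p hp => ?_
    have hp' : 0 < g p.1 := hp
    have : sgn (g p.1) = 1 := by unfold sgn; exact if_pos hp'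
    simp [this]
  have e2 : ∫ p in (Prod.fst ⁻¹' {x | 0 < g x})ᶜ, p.2 * sgn (g p.1) ∂P
      = -∫ x in {x | 0 < g x}ᶜ, η x ∂(P.map Prod.fst) := by
    rw [← hreg _ hS'.compl, ← Set.preimage_compl, ← integral_neg]
    refine setIntegral_congr_fun hpre.compl fun p hp => ?_
    have hp' : ¬ 0 < g p.1 := hp
    have : sgn (g p.1) = -1 := by unfold sgn; exact if_neg hp'
    simp [this]
  have e3 : ∫ x in {x | 0 < g x}, η x * sgn (g x) ∂(P.map Prod.fst)
      = ∫ x in {x | 0 < g x}, η x ∂(P.map Prod.fst) := by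
    refine setIntegral_congr_fun hS' fun x hx => ?_
    have hx' : 0 < g x := hx
    have : sgn (g x) = 1 := by unfold sgn; exact if_pos hx'
    simp [this]
  have e4 : ∫ x in {x | 0 < g x}ᶜ, η x * sgn (g x) ∂(P.map Prod.fst)
      = -∫ x in {x | 0 < g x}ᶜ, η x ∂(P.map Prod.fst) := by
    rw [← integral_neg]
    refine setIntegral_congr_fun hS'.compl fun x hx => ?_
    have hx' : ¬ 0 < g x := hx
    have : sgn (g x) = -1 := by unfold sgn; exact if_neg hx'
    simp [this]
  have split1 := integral_add_compl hpre hTint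
  have split2 := integral_add_compl hS' hηsint
  have step5 : ∫ p, p.2 * sgn (g p.1) ∂P
      = ∫ x, η x * sgn (g x) ∂(P.map Prod.fst) := by
    rw [← split1, ← split2, e1, e2, e3, e4]
  rw [step3, step4, step5]

lemma risk_sub {d : ℕ} {P : Measure ((Fin d → ℝ) × ℝ)} {η : (Fin d → ℝ) → ℝ}
    (hGP : GoodPair d P η) {g : (Fin d → ℝ) → ℝ} (hg : Measurable g) :
    risk P g - risk P η
      = ∫ x, (if sgn (g x) ≠ sgn (η x) then |η x| else 0) ∂(P.map Prod.fst) := by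
  haveI : IsProbabilityMeasure P := hGP.1
  haveI : IsProbabilityMeasure (P.map Prod.fst) :=
    Measure.isProbabilityMeasure_map measurable_fst.aemeasurable
  have hη := hGP.2.1
  have hη1 := hGP.2.2.1
  have hint : ∀ {u : (Fin d → ℝ) → ℝ}, Measurable u →
      Integrable (fun x => η x * sgn (u x)) (P.map Prod.fst) := by
    intro u hu
    refine integrable_of_ae_bdd (hη.mul (measurable_sgn.comp hu)).aestronglyMeasurable
      (C := 1) (Filter.Eventually.of_forall fun x => ?_)
    rcases sgn_cases (u x) with h2 | h2 <;>
      simp [h2, abs_le.2 ⟨(hη1 x).1, (hη1 x).2⟩]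
  have hfun : (fun x => if sgn (g x) ≠ sgn (η x) then |η x| else 0)
      = fun x => (η x * sgn (η x) - η x * sgn (g x)) / 2 :=
    funext fun x => (half_sub (η x) (g x)).symm
  rw [risk_eq hGP hg, risk_eq hGP hη, hfun, integral_div,
    integral_sub (hint hη) (hint hg)]
  ring

lemma bayes_eq {d : ℕ} {P : Measure ((Fin d → ℝ) × ℝ)} {η : (Fin d → ℝ) → ℝ}
    (hGP : GoodPair d P η) : bayesRisk P = risk P η := by
  haveI : Nonempty {g : (Fin d → ℝ) → ℝ // Measurable g ∧
      ∀ x, g x ∈ Set.Icc (-1 : ℝ) 1} := ⟨⟨η, hGP.2.1, hGP.2.2.1⟩⟩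
  have hbdd : BddBelow (Set.range fun g : {g : (Fin d → ℝ) → ℝ // Measurable g ∧
      ∀ x, g x ∈ Set.Icc (-1 : ℝ) 1} => risk P g.1) := by
    refine ⟨0, ?_⟩
    rintro r ⟨g, rfl⟩
    exact ENNReal.toReal_nonneg
  unfold bayesRisk
  apply le_antisymm
  · exact ciInf_le hbdd ⟨η, hGP.2.1, hGP.2.2.1⟩
  · refine le_ciInf fun g => ?_
    have h := risk_sub hGP g.2.1
    have : 0 ≤ ∫ x, (if sgn (g.1 x) ≠ sgn (η x) then |η x| else 0) ∂(P.map Prod.fst) :=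
      integral_nonneg fun x => by split <;> positivity
    linarith
/-- comparison inequality, sup-norm version. -/
theorem statement0 (B γ : ℝ) (hB : 0 < B) (hγ : 0 < γ) :
    ∃ D1 : ℝ, 0 < D1 ∧
      ∀ (d : ℕ) (P : Measure ((Fin d → ℝ) × ℝ)) (η : (Fin d → ℝ) → ℝ),
        GoodPair d P η →
        LowNoise B γ (P.map Prod.fst) η →
        ∀ f : (Fin d → ℝ) → ℝ, Measurable f → (∃ M : ℝ, ∀ x, |f x| ≤ M) →
          risk P f - bayesRisk P ≤
            D1 * (⨆ x ∈ cube d,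
              if sgn (f x) ≠ sgn (η x) then |f x - η x| else 0) ^ (1 + γ) := by
  refine ⟨B, hB, ?_⟩
  intro d P η hGP hLN f hf hfb
  obtain ⟨M, hM⟩ := hfb
  haveI : IsProbabilityMeasure P := hGP.1
  haveI : IsProbabilityMeasure (P.map Prod.fst) :=
    Measure.isProbabilityMeasure_map measurable_fst.aemeasurable
  have hη := hGP.2.1
  have hη1 := hGP.2.2.1
  have hMnn : 0 ≤ M := le_trans (abs_nonneg _) (hM 0)
  set g0 : (Fin d → ℝ) → ℝ :=
    fun x => if sgn (f x) ≠ sgn (η x) then |f x - η x| else 0 with hg0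
  set δ : ℝ := ⨆ x ∈ cube d, g0 x with hδ
  have hg0nn : ∀ x, 0 ≤ g0 x := fun x => by simp only [hg0]; split <;> positivity
  have hg0le : ∀ x, g0 x ≤ M + 1 := by
    intro x
    simp only [hg0]
    split
    · calc |f x - η x| ≤ |f x| + |η x| := abs_sub _ _
        _ ≤ M + 1 := add_le_add (hM x) (abs_le.2 ⟨(hη1 x).1, (hη1 x).2⟩)
    · linarith
  have hδnn : 0 ≤ δ := Real.iSup_nonneg fun x => Real.iSup_nonneg fun _ => hg0nn x
  have hδle : ∀ x ∈ cube d, g0 x ≤ δ := by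
    have hb : BddAbove (Set.range fun x => ⨆ _ : x ∈ cube d, g0 x) := by
      refine ⟨M + 1, ?_⟩
      rintro r ⟨x, rfl⟩
      exact Real.iSup_le (fun _ => hg0le x) (by linarith)
    intro x hx
    have h1 : g0 x ≤ ⨆ _ : x ∈ cube d, g0 x :=
      le_ciSup (f := fun _ : x ∈ cube d => g0 x)
        ⟨g0 x, by rintro r ⟨_, rfl⟩; exact le_rfl⟩ hx
    exact h1.trans (le_ciSup hb x)
  have hcube : ∀ᵐ x ∂(P.map Prod.fst), x ∈ cube d := by
    have hms : MeasurableSet {x : Fin d → ℝ | x ∈ cube d} :=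
      (measurableSet_Icc : MeasurableSet (Set.Icc (0 : Fin d → ℝ) 1))
    exact (MeasureTheory.ae_map_iff measurable_fst.aemeasurable hms).2
      (hGP.2.2.2.1.mono fun p hp => hp.1)
  rw [bayes_eq hGP, risk_sub hGP hf]
  set ind : (Fin d → ℝ) → ℝ :=
    fun x => if sgn (f x) ≠ sgn (η x) then |η x| else 0 with hind
  have hindm : Measurable ind := by
    rw [hind]
    refine Measurable.ite ?_ hη.abs measurable_const
    exact (measurableSet_eq_fun (measurable_sgn.comp hf) (measurable_sgn.comp hη)).compl
  have hindnn : ∀ x, 0 ≤ ind x := fun x => by simp only [hind]; split <;> positivity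
  have hindle : ∀ x, ind x ≤ 1 := by
    intro x
    simp only [hind]
    split
    · exact abs_le.2 ⟨(hη1 x).1, (hη1 x).2⟩
    · linarith
  have hindint : Integrable ind (P.map Prod.fst) :=
    integrable_of_ae_bdd hindm.aestronglyMeasurable (C := 1)
      (Filter.Eventually.of_forall fun x => abs_le.2 ⟨by linarith [hindnn x], hindle x⟩)
  rcases hδnn.eq_or_lt with hz | hpos
  · -- δ = 0: signs agree on the cube, so the excess risk vanishes
    have hzero : ∀ᵐ x ∂(P.map Prod.fst), ind x = 0 := by
      refine hcube.mono fun x hx => ?_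
      simp only [hind]
      split
      · next h =>
        exfalso
        have h1 : g0 x ≤ 0 := hz ▸ hδle x hx
        have h2 : g0 x = |f x - η x| := by simp only [hg0]; exact if_pos h
        have : f x = η x := by
          have := abs_nonneg (f x - η x)
          have : |f x - η x| = 0 := le_antisymm (h2 ▸ h1) this
          have := abs_eq_zero.1 this
          linarith [sub_eq_zero.1 this]
        exact h (by rw [this])
      · rfl
    have : ∫ x, ind x ∂(P.map Prod.fst) = 0 := by
      rw [integral_congr_ae hzero]
      exact integral_zero _ _
    rw [this, ← hz, Real.zero_rpow (by linarith)]
    nlinarith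
  · -- δ > 0: bound the integrand by δ on the low-noise set
    set s : Set (Fin d → ℝ) := {y | |η y| ≤ δ} with hs
    have hsm : MeasurableSet s := measurableSet_le hη.abs measurable_const
    have hmono : ∀ᵐ x ∂(P.map Prod.fst),
        ind x ≤ s.indicator (fun _ => δ) x := by
      refine hcube.mono fun x hx => ?_
      simp only [hind]
      split
      · next h =>
        have h1 : |η x| ≤ |f x - η x| := abs_le_of_sgn_ne h
        have h2 : |f x - η x| ≤ δ := by
          have := hδle x hx
          simpa only [hg0, if_pos h] using this
        have hxs : x ∈ s := by rw [hs]; exact Set.mem_setOf_eq ▸ le_trans h1 h2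
        rw [Set.indicator_of_mem hxs]
        exact le_trans h1 h2
      · exact Set.indicator_nonneg (fun _ _ => hpos.le) x
    have hindicint : Integrable (s.indicator fun _ => δ) (P.map Prod.fst) :=
      (integrable_const δ).indicator hsm
    have hle1 : ∫ x, ind x ∂(P.map Prod.fst)
        ≤ ∫ x, s.indicator (fun _ => δ) x ∂(P.map Prod.fst) :=
      integral_mono_ae hindint hindicint hmono
    have hle2 : ∫ x, s.indicator (fun _ => δ) x ∂(P.map Prod.fst)
        = ((P.map Prod.fst) s).toReal * δ := by
      rw [integral_indicator_const _ hsm]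
      simp [smul_eq_mul]
      left; rfl
    have hmeas : ((P.map Prod.fst) s).toReal ≤ B * δ ^ γ := by
      refine ENNReal.toReal_le_of_le_ofReal (by positivity) ?_
      exact hLN δ hpos
    have hrpow : δ ^ (1 + γ) = δ * δ ^ γ := by
      rw [Real.rpow_add hpos, Real.rpow_one]
    calc ∫ x, ind x ∂(P.map Prod.fst)
        ≤ ((P.map Prod.fst) s).toReal * δ := hle1.trans hle2.le
      _ ≤ (B * δ ^ γ) * δ := by
          have := Real.rpow_nonneg hpos.le γ
          nlinarith
      _ = B * δ ^ (1 + γ) := by rw [hrpow]; ring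

end ActivePlugIn
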